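/- (Categorical equivalence to edge-reconstructability) Let V and W be finite types, and let G : SimpleGraph V and H : SimpleGraph W be simple graphs, each with at least 4 edges. Suppose there is a bijection σ from the edge set of G to the edge set of H and, for every edge e of G, a graph isomorphism γ_e : (G − e) ≅ (H − σ(e)), where G − e denotes the simple graph on V obtained from G by deleting the edge e. Let D be the disjoint union of the edge-deleted subgraphs, the simple graph on the vertex type Σ (e : E(G)), V whose component indexed by e is G − e, and let Γ : D → H be the graph homomorphism that on the component indexed by e acts as γ_e (viewed as a homomorphism into H, since H − σ(e) has the same vertices as H and fewer edges). Then G is isomorphic to H if and only if there exists a graph homomorphism δ : D → G such that (i) δ is surjective on vertices and every edge of G is the image under δ of some edge of D, and (ii) for all vertices x, y of D, Γ(x) = Γ(y) implies δ(x) = δ(y). -/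

import Mathlib

/-- The disjoint union of the single-edge-deleted subgraphs of `G`: the component
indexed by an edge `e` of `G` is `G` with the edge `e` deleted. -/
def SimpleGraph.edgeDeck {V : Type} (G : SimpleGraph V) :
    SimpleGraph (Σ _e : G.edgeSet, V) where
  Adj x y := x.1 = y.1 ∧ (G.deleteEdges {x.1.1}).Adj x.2 y.2
  symm := by
    constructor
    rintro ⟨e, u⟩ ⟨e', v⟩ ⟨h1, h2⟩
    cases h1
    exact ⟨rfl, h2.symm⟩
  loopless := by
    constructor
    rintro ⟨e, u⟩ ⟨-, h2⟩
    exact (G.deleteEdges {e.1}).irrefl h2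

/-- The disjoint union of the single-vertex-deleted subgraphs of `G`: the component
indexed by a vertex `v` of `G` is the induced subgraph of `G` on `{u // u ≠ v}`. -/
def SimpleGraph.vertexDeck {V : Type} (G : SimpleGraph V) :
    SimpleGraph (Σ v : V, {u : V // u ≠ v}) where
  Adj x y := x.1 = y.1 ∧ G.Adj x.2.1 y.2.1
  symm := by
    constructor
    rintro ⟨v, u⟩ ⟨v', u'⟩ ⟨h1, h2⟩
    cases h1
    exact ⟨rfl, h2.symm⟩
  loopless := by
    constructor
    rintro ⟨v, u⟩ ⟨-, h2⟩
    exact G.irrefl h2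

/-- **Categorical equivalence to edge-reconstructability.**  Given finite simple
graphs `G` and `H` with at least 4 edges, a bijection `σ` between their edge sets
and isomorphisms `γ e : G − e ≅ H − σ e` of the edge-deleted subgraphs, let `Γ` be
the homomorphism from the disjoint union `D` of the edge-deleted subgraphs of `G`
to `H` which acts as `γ e` on the component indexed by `e`.  Then `G ≅ H` iff there
is a homomorphism `δ : D → G` that is surjective on vertices and edges and that
coequalizes the kernel pair of `Γ` (i.e. `Γ x = Γ y` implies `δ x = δ y`). -/
theorem edge_reconstructable_iff {V W : Type} [Fintype V] [Fintype W]
    (G : SimpleGraph V) (H : SimpleGraph W)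
    (hG : 4 ≤ G.edgeSet.ncard) (hH : 4 ≤ H.edgeSet.ncard)
    (σ : G.edgeSet ≃ H.edgeSet)
    (γ : ∀ e : G.edgeSet, G.deleteEdges {e.1} ≃g H.deleteEdges {(σ e).1})
    (Γ : G.edgeDeck →g H)
    (hΓ : ∀ (e : G.edgeSet) (u : V), Γ ⟨e, u⟩ = γ e u) :
    Nonempty (G ≃g H) ↔
      ∃ δ : G.edgeDeck →g G,
        (Function.Surjective δ ∧
          ∀ e ∈ G.edgeSet, ∃ d ∈ G.edgeDeck.edgeSet, Sym2.map δ d = e) ∧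
        (∀ x y, Γ x = Γ y → δ x = δ y) := by
  obtain ⟨e₀v, he₀v⟩ := Set.nonempty_of_ncard_ne_zero (s := G.edgeSet) (by omega)
  set e₀ : G.edgeSet := ⟨e₀v, he₀v⟩ with he₀
  have exists_other : ∀ h : H.edgeSet, ∃ e : G.edgeSet, σ e ≠ h := by
    intro h
    obtain ⟨b, hb, hbne⟩ :=
      Set.exists_ne_of_one_lt_ncard (s := G.edgeSet) (by omega) (σ.symm h).1
    refine ⟨⟨b, hb⟩, fun hc => hbne ?_⟩
    have : (⟨b, hb⟩ : G.edgeSet) = σ.symm h := by rw [← hc, Equiv.symm_apply_apply]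
    exact congrArg Subtype.val this
  constructor
  · rintro ⟨φ⟩
    refine ⟨(φ.symm.toHom).comp Γ, ⟨?_, ?_⟩, ?_⟩
    · intro v
      refine ⟨⟨e₀, (γ e₀).symm (φ v)⟩, ?_⟩
      show φ.symm (Γ ⟨e₀, (γ e₀).symm (φ v)⟩) = v
      rw [hΓ]
      simp
    · intro e he
      induction e with
      | h a b =>
        have hab : G.Adj a b := he
        have hH' : s(φ a, φ b) ∈ H.edgeSet := φ.toHom.map_mem_edgeSet he
        obtain ⟨e₁, he₁⟩ := exists_other ⟨s(φ a, φ b), hH'⟩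
        have hmem : s(φ a, φ b) ≠ (σ e₁).1 := fun hc => he₁ (Subtype.ext hc.symm)
        have hadjH : (H.deleteEdges {(σ e₁).1}).Adj (φ a) (φ b) := by
          rw [SimpleGraph.deleteEdges_adj]
          exact ⟨φ.map_adj_iff.mpr hab, by simpa using hmem⟩
        have hadjG : (G.deleteEdges {e₁.1}).Adj ((γ e₁).symm (φ a)) ((γ e₁).symm (φ b)) := by
          rw [← (γ e₁).symm.map_adj_iff] at hadjH
          exact hadjH
        have h1 : (φ.symm.toHom.comp Γ) ⟨e₁, (γ e₁).symm (φ a)⟩ = a := by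
          show φ.symm (Γ ⟨e₁, (γ e₁).symm (φ a)⟩) = a
          rw [hΓ]; simp
        have h2 : (φ.symm.toHom.comp Γ) ⟨e₁, (γ e₁).symm (φ b)⟩ = b := by
          show φ.symm (Γ ⟨e₁, (γ e₁).symm (φ b)⟩) = b
          rw [hΓ]; simp
        refine ⟨s(⟨e₁, (γ e₁).symm (φ a)⟩, ⟨e₁, (γ e₁).symm (φ b)⟩), ⟨rfl, hadjG⟩, ?_⟩
        rw [Sym2.map_pair_eq, h1, h2]
    · intro x y hxy
      show φ.symm (Γ x) = φ.symm (Γ y)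
      rw [hxy]
  · rintro ⟨δ, ⟨hsurj, hedge⟩, hker⟩
    set f : W → V := fun w => δ ⟨e₀, (γ e₀).symm w⟩ with hf
    have key : ∀ (e : G.edgeSet) (u : V), δ ⟨e, u⟩ = f (γ e u) := by
      intro e u
      apply hker
      rw [hΓ, hΓ]
      simp
    have hfsurj : Function.Surjective f := by
      intro v
      obtain ⟨⟨e, u⟩, h⟩ := hsurj v
      exact ⟨γ e u, by rw [← key]; exact h⟩
    have hcardVW : Fintype.card W = Fintype.card V :=
      (Fintype.card_congr (γ e₀).toEquiv.symm)
    have hfbij : Function.Bijective f :=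
      (Fintype.bijective_iff_surjective_and_card f).mpr ⟨hfsurj, hcardVW⟩
    have hhom : ∀ {w w' : W}, H.Adj w w' → G.Adj (f w) (f w') := by
      intro w w' hww
      obtain ⟨e, he⟩ := exists_other ⟨s(w, w'), hww⟩
      have hmem : s(w, w') ≠ (σ e).1 := fun hc => he (Subtype.ext hc.symm)
      have hadjH : (H.deleteEdges {(σ e).1}).Adj w w' := by
        rw [SimpleGraph.deleteEdges_adj]
        exact ⟨hww, by simpa using hmem⟩
      have hadjG : (G.deleteEdges {e.1}).Adj ((γ e).symm w) ((γ e).symm w') := by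
        rw [← (γ e).symm.map_adj_iff] at hadjH
        exact hadjH
      have hD : G.edgeDeck.Adj ⟨e, (γ e).symm w⟩ ⟨e, (γ e).symm w'⟩ := ⟨rfl, hadjG⟩
      have := δ.map_adj hD
      rw [key, key] at this
      simpa using this
    have hconv : ∀ {w w' : W}, G.Adj (f w) (f w') → H.Adj w w' := by
      intro w w' hadj
      obtain ⟨d, hd, hmap⟩ := hedge s(f w, f w') hadj
      induction d with
      | h x y =>
        obtain ⟨e, u⟩ := x
        obtain ⟨e', u'⟩ := y
        obtain ⟨h1, h2⟩ := (SimpleGraph.mem_edgeSet _).mp hd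
        cases h1
        rw [Sym2.map_pair_eq, key, key] at hmap
        have heq : s((γ e) u, (γ e) u') = s(w, w') :=
          Sym2.map.injective hfbij.1 (by rw [Sym2.map_pair_eq]; exact hmap)
        have hadjH : H.Adj ((γ e) u) ((γ e) u') :=
          (SimpleGraph.deleteEdges_adj.mp ((γ e).map_adj_iff.mpr h2)).1
        rcases Sym2.eq_iff.mp heq with ⟨hw, hw'⟩ | ⟨hw, hw'⟩
        · rw [← hw, ← hw']; exact hadjH
        · rw [← hw, ← hw']; exact hadjH.symm
    exact ⟨(RelIso.mk (Equiv.ofBijective f hfbij)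
      (fun {a b} => ⟨hconv, hhom⟩) : H ≃g G).symm⟩
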